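/- arXiv:2110.10647 — 3 statements merged into one kernel-verified Lean document; each statement's English description precedes it below -/
import Mathlib

section
/- With the right eigenvectors r₂ = (0, CaH₃/H₁, −CaH₂/H₁, 0, −H₃, H₂, 0)ᵀ and r₆ = (0, CaH₃/H₁, −CaH₂/H₁, 0, H₃, −H₂, 0)ᵀ, the commutator-type directional derivative satisfies ∇_Φ r₂ · r₆ − ∇_Φ r₆ · r₂ = (0, −2CaH₂/H₁, −2CaH₃/H₁, 0, 0, 0, 0)ᵀ, and consequently the coefficient γ²₂₆ = −(λ₂−λ₆)·l₂·(∇_Φ r₂·r₆ − ∇_Φ r₆·r₂) = (λ₂−λ₆)(H₃H₂/(H₂²+H₃²) − H₂H₃/(H₂²+H₃²)) = 0. -/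
open Matrix

section Vec7Aux
variable {α : Type*} (a0 a1 a2 a3 a4 a5 a6 : α)
lemma vec7_app0 : (![a0,a1,a2,a3,a4,a5,a6]) (0 : Fin 7) = a0 := rfl
lemma vec7_app1 : (![a0,a1,a2,a3,a4,a5,a6]) (1 : Fin 7) = a1 := rfl
lemma vec7_app2 : (![a0,a1,a2,a3,a4,a5,a6]) (2 : Fin 7) = a2 := rfl
lemma vec7_app3 : (![a0,a1,a2,a3,a4,a5,a6]) (3 : Fin 7) = a3 := rfl
lemma vec7_app4 : (![a0,a1,a2,a3,a4,a5,a6]) (4 : Fin 7) = a4 := rfl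
lemma vec7_app5 : (![a0,a1,a2,a3,a4,a5,a6]) (5 : Fin 7) = a5 := rfl
lemma vec7_app6 : (![a0,a1,a2,a3,a4,a5,a6]) (6 : Fin 7) = a6 := rfl
end Vec7Aux

/-- With the right-eigenvector fields `r₂(Φ), r₆(Φ)` of the planar MHD system
(`Φ = (u₁,u₂,u₃,ϱ−1,H₂,H₃,S)`, `Ca = √(μ₀/ϱ)H₁`), the commutator-type directional
derivative satisfies `∇_Φ r₂ · r₆ − ∇_Φ r₆ · r₂ = (0, −2CaH₂/H₁, −2CaH₃/H₁, 0,0,0,0)ᵀ`,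
and consequently `γ²₂₆ = −(λ₂−λ₆)·l₂·(∇_Φ r₂·r₆ − ∇_Φ r₆·r₂) = 0`. -/
theorem MHD_gamma_2_26_vanishes (μ H1 : ℝ) (Φ : Fin 7 → ℝ)
    (hμ : 0 < μ) (hH1 : H1 ≠ 0) (hϱ : 0 < Φ 3 + 1) (hs : 0 < (Φ 4) ^ 2 + (Φ 5) ^ 2) :
    let Ca : (Fin 7 → ℝ) → ℝ := fun ψ => Real.sqrt (μ / (ψ 3 + 1)) * H1
    let R2 : (Fin 7 → ℝ) → Fin 7 → ℝ := fun ψ =>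
      ![0, Ca ψ * ψ 5 / H1, -(Ca ψ * ψ 4 / H1), 0, -(ψ 5), ψ 4, 0]
    let R6 : (Fin 7 → ℝ) → Fin 7 → ℝ := fun ψ =>
      ![0, Ca ψ * ψ 5 / H1, -(Ca ψ * ψ 4 / H1), 0, ψ 5, -(ψ 4), 0]
    let comm : Fin 7 → ℝ := fun i =>
      fderiv ℝ (fun ψ => R2 ψ i) Φ (R6 Φ) - fderiv ℝ (fun ψ => R6 ψ i) Φ (R2 Φ)
    let l2 : Fin 7 → ℝ :=
      ![0, H1 * (Φ 5) / (2 * Ca Φ * ((Φ 4) ^ 2 + (Φ 5) ^ 2)),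
        -(H1 * (Φ 4) / (2 * Ca Φ * ((Φ 4) ^ 2 + (Φ 5) ^ 2))),
        0, -((Φ 5) / (2 * ((Φ 4) ^ 2 + (Φ 5) ^ 2))),
        (Φ 4) / (2 * ((Φ 4) ^ 2 + (Φ 5) ^ 2)), 0]
    let lam2 := Φ 0 + Ca Φ
    let lam6 := Φ 0 - Ca Φ
    comm = ![0, -(2 * Ca Φ * (Φ 4) / H1), -(2 * Ca Φ * (Φ 5) / H1), 0, 0, 0, 0] ∧
    -(lam2 - lam6) * (l2 ⬝ᵥ comm) = 0 := by
  intro Ca R2 R6 comm l2 lam2 lam6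
  have hϱ' : Φ 3 + 1 ≠ 0 := ne_of_gt hϱ
  have hpos : 0 < μ / (Φ 3 + 1) := div_pos hμ hϱ
  have hsqpos : 0 < Real.sqrt (μ / (Φ 3 + 1)) := Real.sqrt_pos.mpr hpos
  have h1 : HasDerivAt (fun x : ℝ => x + 1) 1 (Φ 3) := (hasDerivAt_id _).add_const 1
  have hinner : HasDerivAt (fun x : ℝ => μ / (x + 1))
      ((0 * (Φ 3 + 1) - μ * 1) / (Φ 3 + 1) ^ 2) (Φ 3) :=
    (hasDerivAt_const (Φ 3) μ).div h1 hϱ'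
  have hsqrt := hinner.sqrt (ne_of_gt hpos)
  set c : ℝ := (0 * (Φ 3 + 1) - μ * 1) / (Φ 3 + 1) ^ 2 / (2 * Real.sqrt (μ / (Φ 3 + 1))) with hc
  have hproj3 : HasFDerivAt (fun ψ : Fin 7 → ℝ => ψ 3)
      (ContinuousLinearMap.proj 3 : (Fin 7 → ℝ) →L[ℝ] ℝ) Φ :=
    (ContinuousLinearMap.proj 3 : (Fin 7 → ℝ) →L[ℝ] ℝ).hasFDerivAt
  have hproj4 : HasFDerivAt (fun ψ : Fin 7 → ℝ => ψ 4)
      (ContinuousLinearMap.proj 4 : (Fin 7 → ℝ) →L[ℝ] ℝ) Φ :=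
    (ContinuousLinearMap.proj 4 : (Fin 7 → ℝ) →L[ℝ] ℝ).hasFDerivAt
  have hproj5 : HasFDerivAt (fun ψ : Fin 7 → ℝ => ψ 5)
      (ContinuousLinearMap.proj 5 : (Fin 7 → ℝ) →L[ℝ] ℝ) Φ :=
    (ContinuousLinearMap.proj 5 : (Fin 7 → ℝ) →L[ℝ] ℝ).hasFDerivAt
  have hsq : HasFDerivAt (fun ψ : Fin 7 → ℝ => Real.sqrt (μ / (ψ 3 + 1)))
      (c • (ContinuousLinearMap.proj 3 : (Fin 7 → ℝ) →L[ℝ] ℝ)) Φ :=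
    by have := hsqrt.comp_hasFDerivAt Φ hproj3; exact this
  have hg1 := ((hsq.mul_const H1).fun_mul hproj5).mul_const H1⁻¹
  have hg2 := (((hsq.mul_const H1).fun_mul hproj4).mul_const H1⁻¹).fun_neg
  have hcomm : comm = ![0, -(2 * Ca Φ * (Φ 4) / H1), -(2 * Ca Φ * (Φ 5) / H1), 0, 0, 0, 0] := by
    funext i
    fin_cases i
    · show fderiv ℝ (fun _ : Fin 7 → ℝ => (0:ℝ)) Φ (R6 Φ)
        - fderiv ℝ (fun _ : Fin 7 → ℝ => (0:ℝ)) Φ (R2 Φ) = (0:ℝ)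
      rw [fderiv_fun_const]
      simp
    · show fderiv ℝ (fun ψ => Real.sqrt (μ / (ψ 3 + 1)) * H1 * ψ 5 / H1) Φ (R6 Φ)
        - fderiv ℝ (fun ψ => Real.sqrt (μ / (ψ 3 + 1)) * H1 * ψ 5 / H1) Φ (R2 Φ)
        = -(2 * Ca Φ * (Φ 4) / H1)
      have hfe : (fun ψ : Fin 7 → ℝ => Real.sqrt (μ / (ψ 3 + 1)) * H1 * ψ 5 / H1)
          = fun ψ : Fin 7 → ℝ => Real.sqrt (μ / (ψ 3 + 1)) * H1 * ψ 5 * H1⁻¹ :=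
        funext fun _ => div_eq_mul_inv _ _
      rw [hfe, hg1.fderiv]
      simp [R2, R6, Ca, vec7_app0, vec7_app1, vec7_app2, vec7_app3, vec7_app4, vec7_app5, vec7_app6]
      field_simp
      ring
    · show fderiv ℝ (fun ψ => -(Real.sqrt (μ / (ψ 3 + 1)) * H1 * ψ 4 / H1)) Φ (R6 Φ)
        - fderiv ℝ (fun ψ => -(Real.sqrt (μ / (ψ 3 + 1)) * H1 * ψ 4 / H1)) Φ (R2 Φ)
        = -(2 * Ca Φ * (Φ 5) / H1)
      have hfe : (fun ψ : Fin 7 → ℝ => -(Real.sqrt (μ / (ψ 3 + 1)) * H1 * ψ 4 / H1))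
          = fun ψ : Fin 7 → ℝ => -(Real.sqrt (μ / (ψ 3 + 1)) * H1 * ψ 4 * H1⁻¹) :=
        funext fun _ => by rw [div_eq_mul_inv]
      rw [hfe, hg2.fderiv]
      simp [R2, R6, Ca, vec7_app0, vec7_app1, vec7_app2, vec7_app3, vec7_app4, vec7_app5, vec7_app6]
      field_simp
      ring
    · show fderiv ℝ (fun _ : Fin 7 → ℝ => (0:ℝ)) Φ (R6 Φ)
        - fderiv ℝ (fun _ : Fin 7 → ℝ => (0:ℝ)) Φ (R2 Φ) = (0:ℝ)
      rw [fderiv_fun_const]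
      simp
    · show fderiv ℝ (fun ψ : Fin 7 → ℝ => -(ψ 5)) Φ (R6 Φ)
        - fderiv ℝ (fun ψ : Fin 7 → ℝ => ψ 5) Φ (R2 Φ) = 0
      rw [hproj5.fun_neg.fderiv, hproj5.fderiv]
      simp [R2, R6, vec7_app0, vec7_app1, vec7_app2, vec7_app3, vec7_app4, vec7_app5, vec7_app6]
    · show fderiv ℝ (fun ψ : Fin 7 → ℝ => ψ 4) Φ (R6 Φ)
        - fderiv ℝ (fun ψ : Fin 7 → ℝ => -(ψ 4)) Φ (R2 Φ) = 0
      rw [hproj4.fun_neg.fderiv, hproj4.fderiv]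
      simp [R2, R6, vec7_app0, vec7_app1, vec7_app2, vec7_app3, vec7_app4, vec7_app5, vec7_app6]
    · show fderiv ℝ (fun _ : Fin 7 → ℝ => (0:ℝ)) Φ (R6 Φ)
        - fderiv ℝ (fun _ : Fin 7 → ℝ => (0:ℝ)) Φ (R2 Φ) = (0:ℝ)
      rw [fderiv_fun_const]
      simp
  refine ⟨hcomm, ?_⟩
  have hCa : Ca Φ ≠ 0 := mul_ne_zero (ne_of_gt hsqpos) hH1
  have hdot : l2 ⬝ᵥ ![0, -(2 * Ca Φ * (Φ 4) / H1), -(2 * Ca Φ * (Φ 5) / H1), 0, 0, 0, 0] = 0 := by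
    simp only [dotProduct, Fin.sum_univ_seven, l2, Matrix.cons_val_zero, Matrix.cons_val_one,
      Matrix.head_cons, vec7_app0, vec7_app1, vec7_app2, vec7_app3, vec7_app4, vec7_app5, vec7_app6]
    field_simp
    ring
  rw [hcomm, hdot, mul_zero]
end

section
/- When H₁ = 0 the planar MHD system's genuine nonlinearity coefficient is c¹₁₁(Φ) = −(1/2 + γc²/(2Cf²) + μ₀(H₂²+H₃²)/(ϱCf²)), which is strictly negative for all Φ with ϱ > 0 and c > 0, where Cf² = μ₀(H₂²+H₃²)/ϱ + c². -/
set_option maxHeartbeats 2000000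


/-- When `H₁ = 0`, with `λ₁(Φ) = u₁ + Cf`, `Cf = √(μ₀(H₂²+H₃²)/ϱ + c²)`,
`c² = Aγϱ^{γ−1}e^S`, and `r₁ = (−1,0,0,−ϱ/Cf,−H₂/Cf,−H₃/Cf,0)ᵀ`, the genuine
nonlinearity coefficient is
`c¹₁₁(Φ) = ∇_Φλ₁·r₁ = −(1/2 + γc²/(2Cf²) + μ₀(H₂²+H₃²)/(ϱCf²))`, which is strictly
negative. -/
theorem MHD_c111_formula (A γ μ : ℝ) (hA : 0 < A) (hγ : 1 < γ) (hμ : 0 < μ)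
    (Φ : Fin 7 → ℝ) (hϱ : 0 < Φ 3 + 1) :
    let ϱ := Φ 3 + 1
    let c2 := A * γ * ϱ ^ (γ - 1) * Real.exp (Φ 6)
    let Cf2 := μ * ((Φ 4) ^ 2 + (Φ 5) ^ 2) / ϱ + c2
    let Cf := Real.sqrt Cf2
    let lam1 : (Fin 7 → ℝ) → ℝ := fun ψ => ψ 0 +
      Real.sqrt (μ * ((ψ 4) ^ 2 + (ψ 5) ^ 2) / (ψ 3 + 1)
        + A * γ * (ψ 3 + 1) ^ (γ - 1) * Real.exp (ψ 6))
    let r1 : Fin 7 → ℝ := ![-1, 0, 0, -(ϱ / Cf), -(Φ 4 / Cf), -(Φ 5 / Cf), 0]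
    fderiv ℝ lam1 Φ r1
        = -(1 / 2 + γ * c2 / (2 * Cf2) + μ * ((Φ 4) ^ 2 + (Φ 5) ^ 2) / (ϱ * Cf2)) ∧
    -(1 / 2 + γ * c2 / (2 * Cf2) + μ * ((Φ 4) ^ 2 + (Φ 5) ^ 2) / (ϱ * Cf2)) < 0 := by
  intro ϱ c2 Cf2 Cf lam1 r1
  have hp : ∀ i : Fin 7, HasFDerivAt (fun ψ : Fin 7 → ℝ => ψ i)
      (ContinuousLinearMap.proj i : (Fin 7 → ℝ) →L[ℝ] ℝ) Φ := fun i =>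
    (ContinuousLinearMap.proj i : (Fin 7 → ℝ) →L[ℝ] ℝ).hasFDerivAt
  have hrp : 0 < (Φ 3 + 1) ^ (γ - 1) := Real.rpow_pos_of_pos hϱ _
  have hc2 : 0 < c2 := by
    have h := Real.exp_pos (Φ 6); show 0 < A * γ * (Φ 3 + 1) ^ (γ - 1) * Real.exp (Φ 6)
    positivity
  have hCf2 : 0 < Cf2 := by
    have h1 : 0 ≤ μ * ((Φ 4) ^ 2 + (Φ 5) ^ 2) / ϱ := by positivity
    exact add_pos_of_nonneg_of_pos h1 hc2
  have hCf : 0 < Cf := Real.sqrt_pos.mpr hCf2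
  have hsq : Cf ^ 2 = Cf2 := Real.sq_sqrt hCf2.le
  have hnum : HasFDerivAt (fun ψ : Fin 7 → ℝ => μ * ((ψ 4) ^ 2 + (ψ 5) ^ 2))
      (μ • ((Φ 4 • (ContinuousLinearMap.proj 4 : (Fin 7 → ℝ) →L[ℝ] ℝ)
          + Φ 4 • ContinuousLinearMap.proj 4)
        + (Φ 5 • (ContinuousLinearMap.proj 5 : (Fin 7 → ℝ) →L[ℝ] ℝ)
          + Φ 5 • ContinuousLinearMap.proj 5))) Φ := by
    simpa [pow_two] using (((hp 4).mul (hp 4)).add ((hp 5).mul (hp 5))).const_mul μ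
  have hden : HasFDerivAt (fun ψ : Fin 7 → ℝ => ψ 3 + 1)
      (ContinuousLinearMap.proj 3 : (Fin 7 → ℝ) →L[ℝ] ℝ) Φ := by
    simpa using (hp 3).add_const 1
  have hinv : HasFDerivAt (fun ψ : Fin 7 → ℝ => (ψ 3 + 1)⁻¹)
      ((-((Φ 3 + 1) ^ 2)⁻¹) • (ContinuousLinearMap.proj 3 : (Fin 7 → ℝ) →L[ℝ] ℝ)) Φ :=
    (hasDerivAt_inv (ne_of_gt hϱ)).comp_hasFDerivAt Φ hden
  have hdiv : HasFDerivAt (fun ψ : Fin 7 → ℝ => μ * ((ψ 4) ^ 2 + (ψ 5) ^ 2) / (ψ 3 + 1))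
      ((μ * ((Φ 4) ^ 2 + (Φ 5) ^ 2)) •
          ((-((Φ 3 + 1) ^ 2)⁻¹) • (ContinuousLinearMap.proj 3 : (Fin 7 → ℝ) →L[ℝ] ℝ))
        + (Φ 3 + 1)⁻¹ • (μ • ((Φ 4 • (ContinuousLinearMap.proj 4 : (Fin 7 → ℝ) →L[ℝ] ℝ)
          + Φ 4 • ContinuousLinearMap.proj 4)
        + (Φ 5 • (ContinuousLinearMap.proj 5 : (Fin 7 → ℝ) →L[ℝ] ℝ)
          + Φ 5 • ContinuousLinearMap.proj 5)))) Φ := by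
    simpa [div_eq_mul_inv, Pi.mul_def] using hnum.mul hinv
  have hrpow := (hden.rpow_const (p := γ - 1) (Or.inl (ne_of_gt hϱ))).const_mul (A * γ)
  have hexp := (hp 6).exp
  have hmul := hrpow.mul hexp
  have hsum := hdiv.add hmul
  have hg : 0 < μ * ((Φ 4) ^ 2 + (Φ 5) ^ 2) / (Φ 3 + 1)
      + A * γ * (Φ 3 + 1) ^ (γ - 1) * Real.exp (Φ 6) := hCf2
  have hsqrt := hsum.sqrt (ne_of_gt hg)
  have hlam := (hp 0).add hsqrt
  have hF : fderiv ℝ lam1 Φ = _ := hlam.fderiv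
  constructor
  · rw [hF]
    simp only [ContinuousLinearMap.add_apply, ContinuousLinearMap.smul_apply,
      ContinuousLinearMap.coe_smul', Pi.smul_apply, ContinuousLinearMap.proj_apply,
      smul_eq_mul]
    have hr0 : r1 0 = -1 := rfl
    have hr3 : r1 3 = -(ϱ / Cf) := rfl
    have hr4 : r1 4 = -(Φ 4 / Cf) := rfl
    have hr5 : r1 5 = -(Φ 5 / Cf) := rfl
    have hr6 : r1 6 = 0 := rfl
    rw [hr0, hr3, hr4, hr5, hr6]
    have e1 : Real.sqrt (μ * (Φ 4 ^ 2 + Φ 5 ^ 2) / (Φ 3 + 1)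
        + A * γ * (Φ 3 + 1) ^ (γ - 1) * Real.exp (Φ 6)) = Cf := rfl
    simp only [Pi.add_apply, Pi.mul_apply]
    rw [e1]
    have hϱdef : ϱ = Φ 3 + 1 := rfl
    have hc2def : c2 = A * γ * (Φ 3 + 1) ^ (γ - 1) * Real.exp (Φ 6) := rfl
    rw [hϱdef, hc2def, show Cf2 = Cf ^ 2 from hsq.symm]
    have hrpm : (Φ 3 + 1) ^ (γ - 1 - 1) = (Φ 3 + 1) ^ (γ - 1) / (Φ 3 + 1) := by
      rw [Real.rpow_sub hϱ, Real.rpow_one]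
    rw [hrpm]
    have hsq' : Cf ^ 2 = μ * ((Φ 4) ^ 2 + (Φ 5) ^ 2) / (Φ 3 + 1)
        + A * γ * (Φ 3 + 1) ^ (γ - 1) * Real.exp (Φ 6) := hsq
    have hϱ' : (Φ 3 + 1) ≠ 0 := ne_of_gt hϱ
    have hCf' : Cf ≠ 0 := ne_of_gt hCf
    field_simp at hsq' ⊢
    linear_combination (-1) * hsq'
  · have h1 : 0 ≤ μ * ((Φ 4) ^ 2 + (Φ 5) ^ 2) / (ϱ * Cf2) := by positivity
    have h2 : 0 < γ * c2 / (2 * Cf2) := by positivity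
    nlinarith
end

section
/- For the planar MHD matrix with H₁ = 0, the 7×7 matrix A(Φ) with first row (u₁,0,0,c²/ϱ,μ₀H₂/ϱ,μ₀H₃/ϱ,∂_Sp/ϱ), fourth row (ϱ,0,0,u₁,0,0,0), fifth row (H₂,0,0,0,u₁,0,0), sixth row (H₃,0,0,0,0,u₁,0), and remaining diagonal entries u₁, has eigenvalues u₁+Cf, u₁ (with algebraic and geometric multiplicity 5), and u₁−Cf, where Cf = {μ₀(H₂²+H₃²)/ϱ + c²}^{1/2}; in particular A(Φ) is diagonalizable with the 7 explicit eigenvectors r₁ = (−1,0,0,−ϱ/Cf,−H₂/Cf,−H₃/Cf,0)ᵀ, r₂ = e₂, r₃ = e₃, r₄ = (0,0,0,−∂_Sp/c²,0,0,1)ᵀ, r₅ = (0,0,0,−μ₀H₂/c²,1,0,0)ᵀ, r₆ = (0,0,0,−μ₀H₃/c²,0,1,0)ᵀ, r₇ = (−1,0,0,ϱ/Cf,H₂/Cf,H₃/Cf,0)ᵀ. -/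
open Matrix

/-- For `H₁ = 0`, the planar MHD matrix has eigenvalues `u₁+Cf`, `u₁`
(with multiplicity 5) and `u₁−Cf`, `Cf = √(μ₀(H₂²+H₃²)/ϱ + c²)`; it is diagonalizable
with the seven explicit eigenvectors `r₁,…,r₇`, which are linearly independent. -/
theorem MHD_H1_zero_diagonalizable (u1 ϱ c2 pS μ H2 H3 : ℝ)
    (hϱ : 0 < ϱ) (hc2 : 0 < c2) (hμ : 0 < μ) :
    let Cf := Real.sqrt (μ * (H2 ^ 2 + H3 ^ 2) / ϱ + c2)
    let A : Matrix (Fin 7) (Fin 7) ℝ :=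
      !![u1, 0, 0, c2 / ϱ, μ * H2 / ϱ, μ * H3 / ϱ, pS / ϱ;
         0, u1, 0, 0, 0, 0, 0;
         0, 0, u1, 0, 0, 0, 0;
         ϱ, 0, 0, u1, 0, 0, 0;
         H2, 0, 0, 0, u1, 0, 0;
         H3, 0, 0, 0, 0, u1, 0;
         0, 0, 0, 0, 0, 0, u1]
    let r1 : Fin 7 → ℝ := ![-1, 0, 0, -(ϱ / Cf), -(H2 / Cf), -(H3 / Cf), 0]
    let r2 : Fin 7 → ℝ := ![0, 1, 0, 0, 0, 0, 0]
    let r3 : Fin 7 → ℝ := ![0, 0, 1, 0, 0, 0, 0]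
    let r4 : Fin 7 → ℝ := ![0, 0, 0, -(pS / c2), 0, 0, 1]
    let r5 : Fin 7 → ℝ := ![0, 0, 0, -(μ * H2 / c2), 1, 0, 0]
    let r6 : Fin 7 → ℝ := ![0, 0, 0, -(μ * H3 / c2), 0, 1, 0]
    let r7 : Fin 7 → ℝ := ![-1, 0, 0, ϱ / Cf, H2 / Cf, H3 / Cf, 0]
    A.mulVec r1 = (u1 + Cf) • r1 ∧
    A.mulVec r2 = u1 • r2 ∧
    A.mulVec r3 = u1 • r3 ∧
    A.mulVec r4 = u1 • r4 ∧
    A.mulVec r5 = u1 • r5 ∧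
    A.mulVec r6 = u1 • r6 ∧
    A.mulVec r7 = (u1 - Cf) • r7 ∧
    LinearIndependent ℝ ![r1, r2, r3, r4, r5, r6, r7] := by
  intro Cf A r1 r2 r3 r4 r5 r6 r7
  have harg : 0 < μ * (H2 ^ 2 + H3 ^ 2) / ϱ + c2 := by positivity
  have hCf : 0 < Cf := Real.sqrt_pos.mpr harg
  have hCf0 : Cf ≠ 0 := ne_of_gt hCf
  have hϱ0 : ϱ ≠ 0 := ne_of_gt hϱ
  have hc20 : c2 ≠ 0 := ne_of_gt hc2
  have hCf2' : ϱ * Cf ^ 2 = μ * (H2 ^ 2 + H3 ^ 2) + ϱ * c2 := by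
    have h := Real.sq_sqrt harg.le
    show ϱ * Real.sqrt (μ * (H2 ^ 2 + H3 ^ 2) / ϱ + c2) ^ 2 = _
    rw [h]; field_simp
  clear_value Cf
  refine ⟨?_, ?_, ?_, ?_, ?_, ?_, ?_, ?_⟩
  case _ | _ | _ | _ | _ | _ | _ =>
    simp only [A, r1, r2, r3, r4, r5, r6, r7, Matrix.cons_mulVec, Matrix.cons_dotProduct,
      Matrix.dotProduct_of_isEmpty, Matrix.smul_cons, Matrix.smul_empty, smul_eq_mul,
      Matrix.empty_mulVec, Matrix.head_cons, Matrix.tail_cons]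
    simp only [Matrix.vecCons, Fin.cons_inj, and_true]
    refine ⟨?_, ?_, ?_, ?_, ?_, ?_, ?_⟩ <;> field_simp <;>
      first
        | ring1
        | linear_combination (ϱ * Cf ^ 2) * hCf2'
        | linear_combination (-(ϱ * Cf ^ 2)) * hCf2'
        | linear_combination (ϱ ^ 2 * Cf ^ 2) * hCf2'
        | linear_combination (-(ϱ ^ 2 * Cf ^ 2)) * hCf2'
        | linear_combination Cf * hCf2'
        | linear_combination (-Cf) * hCf2'
        | linear_combination (ϱ * Cf) * hCf2'
        | linear_combination (-(ϱ * Cf)) * hCf2'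
        | linear_combination (2 : ℝ) * hCf2'
        | linear_combination (-2 : ℝ) * hCf2'
        | linear_combination hCf2'
        | linear_combination (-1 : ℝ) * hCf2'
  · rw [Fintype.linearIndependent_iff]
    intro g hg
    rw [Fin.sum_univ_seven] at hg
    have hg2 : g 0 • r1 + g 1 • r2 + g 2 • r3 + g 3 • r4 + g 4 • r5 + g 5 • r6 + g 6 • r7
        = 0 := hg
    simp only [r1, r2, r3, r4, r5, r6, r7, Matrix.smul_cons, smul_eq_mul, Matrix.smul_empty,
      Matrix.cons_add_cons, Matrix.empty_add_empty, Matrix.cons_eq_zero_iff,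
      eq_iff_true_of_subsingleton, and_true, mul_zero, mul_one, mul_neg, add_zero, zero_add,
      neg_add_rev, mul_neg_one] at hg2
    obtain ⟨e0, e1, e2, e3, e4, e5, e6⟩ := hg2
    field_simp at e0 e3 e4 e5
    have E3 : -(g 0 * ϱ * c2) - g 3 * pS * Cf - g 4 * μ * H2 * Cf - g 5 * μ * H3 * Cf
        + g 6 * ϱ * c2 = 0 := by
      have h' : (-(g 0 * ϱ * c2) - g 3 * pS * Cf - g 4 * μ * H2 * Cf - g 5 * μ * H3 * Cf
          + g 6 * ϱ * c2) * (c2 ^ 2 * Cf) = 0 := by linear_combination (c2 ^ 2 * Cf) * e3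
      rcases mul_eq_zero.mp h' with h | h
      · exact h
      · exact absurd h (by positivity)
    have key : g 0 * (ϱ * Cf ^ 2) * 2 = 0 := by
      linear_combination (-1 : ℝ) * E3 + (-(μ * H2)) * e4 + (-(μ * H3)) * e5
        + (-(pS * Cf)) * e6 + (-(ϱ * c2 + μ * (H2 ^ 2 + H3 ^ 2))) * e0 + (2 * g 0) * hCf2'
    have hg0 : g 0 = 0 := by
      have h2 : ϱ * Cf ^ 2 ≠ 0 := by positivity
      have := mul_eq_zero.mp key
      rcases this with h | h
      · rcases mul_eq_zero.mp h with h' | h'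
        · exact h'
        · exact absurd h' h2
      · norm_num at h
    have hg6 : g 6 = 0 := by linarith [e0]
    rw [hg0, hg6] at e4 e5
    have hg4 : g 4 = 0 := by
      simp [hCf0] at e4
      exact e4
    have hg5 : g 5 = 0 := by
      simp [hCf0] at e5
      exact e5
    intro i
    fin_cases i <;> assumption
end
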